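/- Let F be a semifield, let R = M_{n₁}(F) × ⋯ × M_{n_r}(F) be a matricial F-algebra, and let φ: R → S be an F-algebra homomorphism into a matricial F-algebra S. Then φ(R) ≅ ∏_{j∈J} M_{n_j}(F) for some subset J ⊆ {1,…,r}; in particular, φ(R) is a matricial F-algebra. -/

import Mathlib

/-- The image of a matricial algebra `M_{n₁}(F) × ⋯ × M_{n_r}(F)` over a semifield `F`
under an `F`-algebra homomorphism into a matricial `F`-algebra is isomorphic to
`∏_{j ∈ J} M_{n_j}(F)` for some subset `J ⊆ {1,…,r}`; in particular it is itself a
matricial `F`-algebra. -/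
theorem image_of_matricial_algebra (F : Type) [Semifield F] (r : ℕ) (n : Fin r → ℕ+)
    (S : Type) [Semiring S] [Algebra F S]
    (hS : ∃ (s : ℕ) (m : Fin s → ℕ+),
      Nonempty (S ≃ₐ[F] ∀ j, Matrix (Fin (m j)) (Fin (m j)) F))
    (φ : (∀ i, Matrix (Fin (n i)) (Fin (n i)) F) →ₐ[F] S) :
    ∃ J : Finset (Fin r),
      Nonempty (φ.range ≃ₐ[F] ∀ j : J, Matrix (Fin (n j)) (Fin (n j)) F) := by
  classical
  obtain ⟨s, m, ⟨e⟩⟩ := hS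
  -- cancellation lemma in S
  have hcancel : ∀ (u : S), u ≠ 0 → ∀ c d : F, c • u = d • u → c = d := by
    intro u hu c d h
    have hu' : e u ≠ 0 := by
      intro h0
      exact hu (e.injective (by rw [h0, map_zero]))
    obtain ⟨j, hj⟩ : ∃ j, e u j ≠ 0 := by
      by_contra hc; push_neg at hc
      exact hu' (funext hc)
    obtain ⟨k, l, hkl⟩ : ∃ k l, e u j k l ≠ 0 := by
      by_contra hc; push_neg at hc
      exact hj (Matrix.ext fun k l => by simpa using hc k l)
    have h2 : c • e u = d • e u := by
      rw [← map_smul e, ← map_smul e, h]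
    have h3 : c * e u j k l = d * e u j k l := congrFun (congrFun (congrFun h2 j) k) l
    exact mul_right_cancel₀ hkl h3
  -- the support of φ
  set J : Finset (Fin r) := Finset.univ.filter (fun i => φ (Pi.single i 1) ≠ 0) with hJ
  have hmemJ : ∀ i : Fin r, i ∈ J ↔ φ (Pi.single i 1) ≠ 0 := by
    intro i; simp [hJ]
  -- extension by zero
  set ext : (∀ j : J, Matrix (Fin (n j)) (Fin (n j)) F) →
      (∀ i, Matrix (Fin (n i)) (Fin (n i)) F) :=
    fun x i => if h : i ∈ J then x ⟨i, h⟩ else 0 with hext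
  have hext_add : ∀ x y, ext (x + y) = ext x + ext y := by
    intro x y; funext i; by_cases h : i ∈ J <;> simp [hext, h]
  have hext_mul : ∀ x y, ext (x * y) = ext x * ext y := by
    intro x y; funext i; by_cases h : i ∈ J <;> simp [hext, h]
  have hext_smul : ∀ (c : F) x, ext (c • x) = c • ext x := by
    intro c x; funext i; by_cases h : i ∈ J <;> simp [hext, h]
  have hext_zero : ext 0 = 0 := by
    funext i; by_cases h : i ∈ J <;> simp [hext, h]
  have hext_sum : ∀ x : ∀ i, Matrix (Fin (n i)) (Fin (n i)) F,
      ext (fun j : J => x j) = ∑ i ∈ J, Pi.single i (x i) := by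
    intro x; funext k
    rw [Finset.sum_apply, Finset.sum_pi_single]
    by_cases h : k ∈ J <;> simp [hext, h]
  have hvanish : ∀ (x : ∀ i, Matrix (Fin (n i)) (Fin (n i)) F) (i : Fin r), i ∉ J →
      φ (Pi.single i (x i)) = 0 := by
    intro x i hi
    have h0 : φ (Pi.single i (1 : Matrix (Fin (n i)) (Fin (n i)) F)) = 0 := by
      by_contra hc; exact hi ((hmemJ i).2 hc)
    have : Pi.single i (x i)
        = Pi.single i (x i) * (Pi.single i 1 : ∀ i, Matrix (Fin (n i)) (Fin (n i)) F) := by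
      rw [← Pi.single_mul, mul_one]
    rw [this, map_mul, h0, mul_zero]
  have hφext : ∀ x : ∀ i, Matrix (Fin (n i)) (Fin (n i)) F,
      φ (ext fun j : J => x j) = φ x := by
    intro x
    rw [hext_sum, map_sum]
    rw [Finset.sum_subset (Finset.subset_univ J)
      (fun i _ hi => hvanish x i hi)]
    rw [← map_sum, Finset.univ_sum_single]
  have hext_one : φ (ext 1) = 1 := by
    have : (ext fun j : J => (1 : ∀ i, Matrix (Fin (n i)) (Fin (n i)) F) j) = ext 1 := rfl
    rw [← this, hφext, map_one]
  -- the algebra hom ψ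
  set ψ : (∀ j : J, Matrix (Fin (n j)) (Fin (n j)) F) →ₐ[F] S :=
    { toFun := fun x => φ (ext x)
      map_one' := hext_one
      map_mul' := fun x y => by show φ (ext (x * y)) = φ (ext x) * φ (ext y); rw [hext_mul, map_mul]
      map_zero' := by show φ (ext 0) = 0; rw [hext_zero, map_zero]
      map_add' := fun x y => by show φ (ext (x + y)) = φ (ext x) + φ (ext y); rw [hext_add, map_add]
      commutes' := fun c => by
        show φ (ext ((algebraMap F (∀ j : J, Matrix (Fin (n j)) (Fin (n j)) F)) c)) = _
        have h1 : (algebraMap F (∀ j : J, Matrix (Fin (n j)) (Fin (n j)) F)) c = c • 1 :=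
          Algebra.algebraMap_eq_smul_one c
        rw [h1, hext_smul, map_smul]
        rw [hext_one, Algebra.algebraMap_eq_smul_one] } with hψ
  have hψ_apply : ∀ x, ψ x = φ (ext x) := fun _ => rfl
  -- injectivity of ψ
  have hinj : Function.Injective ψ := by
    intro x y hxy
    rw [hψ_apply, hψ_apply] at hxy
    funext j
    ext k l
    have hiJ : (j : Fin r) ∈ J := j.2
    set z : Fin (n j) := ⟨0, (n (j : Fin r)).pos⟩ with hz
    -- sandwich identity
    have hsand : ∀ (M : Matrix (Fin (n j)) (Fin (n j)) F),
        Matrix.single z k 1 * M * Matrix.single l z 1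
          = (M k l) • Matrix.single z z 1 := by
      intro M
      ext a b
      by_cases ha : a = z <;> by_cases hb : b = z
      · subst ha; subst hb; simp
      · subst ha
        rw [Matrix.mul_single_apply_of_ne (hbj := hb),
          Matrix.smul_apply, Matrix.single_apply_of_col_ne _ _ (Ne.symm hb), smul_zero]
      · subst hb
        rw [Matrix.mul_assoc, Matrix.single_mul_apply_of_ne (h := ha),
          Matrix.smul_apply, Matrix.single_apply_of_row_ne (Ne.symm ha), smul_zero]
      · rw [Matrix.mul_single_apply_of_ne (hbj := hb),
          Matrix.smul_apply, Matrix.single_apply_of_row_ne (Ne.symm ha), smul_zero]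
    set u : S := φ (Pi.single (j : Fin r) (Matrix.single z z 1)) with hu
    -- u ≠ 0
    have hone : (1 : Matrix (Fin (n j)) (Fin (n j)) F)
        = ∑ p : Fin (n j), Matrix.single p p 1 := by
      ext a b
      rw [Matrix.sum_apply]
      by_cases hab : a = b
      · subst hab
        rw [Finset.sum_eq_single a (fun p _ hp => by simp [hp]) (by simp)]
        simp
      · rw [Finset.sum_eq_zero (fun p _ => by
          by_cases hpa : p = a
          · subst hpa; simp [hab]
          · simp [hpa])]
        simp [Matrix.one_apply, hab]
    have hu0 : u ≠ 0 := by
      intro h0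
      apply (hmemJ (j : Fin r)).1 hiJ
      have hE : ∀ p : Fin (n j), Matrix.single p p (1 : F)
          = Matrix.single p z 1 * Matrix.single z z 1
            * Matrix.single z p 1 := by
        intro p
        rw [Matrix.single_mul_single_same, Matrix.single_mul_single_same]
        norm_num
      have hsingle_sum : Pi.single (j : Fin r) (1 : Matrix (Fin (n j)) (Fin (n j)) F)
          = ∑ p : Fin (n j),
            (Pi.single (j : Fin r) (Matrix.single p p (1 : F)) :
              ∀ i, Matrix (Fin (n i)) (Fin (n i)) F) := by
        rw [hone]
        exact map_sum (LinearMap.single F (fun i => Matrix (Fin (n i)) (Fin (n i)) F)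
          (j : Fin r)) _ _
      rw [hsingle_sum, map_sum]
      apply Finset.sum_eq_zero
      intro p _
      rw [hE p, Pi.single_mul, Pi.single_mul, map_mul, map_mul, ← hu, h0,
        mul_zero, zero_mul]
    -- sandwich both sides
    have hkey : ∀ (w : ∀ j : J, Matrix (Fin (n j)) (Fin (n j)) F),
        φ (Pi.single (j : Fin r) (Matrix.single z k 1)) * φ (ext w)
          * φ (Pi.single (j : Fin r) (Matrix.single l z 1))
        = (w j k l) • u := by
      intro w
      rw [← map_mul, ← map_mul]
      have h1 : Pi.single (j : Fin r) (Matrix.single z k 1) * ext w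
          = Pi.single (j : Fin r) (Matrix.single z k 1 * (ext w) (j : Fin r)) :=
        (Pi.single_mul_left _).symm
      have h2 : (ext w) (j : Fin r) = w j := by
        simp only [hext, hiJ, dif_pos]
      rw [h1, h2, ← Pi.single_mul, hsand, hu, Pi.single_smul, map_smul]
    have h1 := hkey x
    have h2 := hkey y
    rw [hxy] at h1
    exact hcancel u hu0 _ _ (h1.symm.trans h2)
  -- ranges agree
  have hrange : ψ.range = φ.range := by
    apply le_antisymm
    · rintro w ⟨x, rfl⟩
      exact ⟨ext x, rfl⟩
    · rintro w ⟨x, rfl⟩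
      exact ⟨fun j : J => x j, hφext x⟩
  exact ⟨J, ⟨(Subalgebra.equivOfEq _ _ hrange.symm).trans (AlgEquiv.ofInjective ψ hinj).symm⟩⟩
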